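/- Existence of anchor rows and columns under MCAR (fixed entry): let the entries D_{ab}, (a,b) ∈ [L]×[L], be i.i.d. Bernoulli(p) random variables, let Q ≥ 2 be an integer dividing L−1, and suppose p^{2Q²} ≥ 10 · Q · log(L−1) / (L−1). Then with probability at least 1 − (L−1)^{−10}, there exist sets R ⊆ [L]∖{1} and C ⊆ [L]∖{1} with |R| = |C| = Q such that D_{ab} = 1 for every (a,b) ∈ ({1} ∪ R) × ({1} ∪ C) with (a,b) ≠ (1,1); that is, entry (1,1) admits Q anchor rows and Q anchor columns forming a fully revealed submatrix. -/

import Mathlib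

open MeasureTheory ProbabilityTheory

/-- For an entry `(i,j)` of an `L × L` Boolean mask `D`, `HasAnchors D Q i j` says that
there exist a set `R` of `Q` rows distinct from `i` and a set `C` of `Q` columns distinct
from `j` such that `D a b = 1` for every `(a,b) ∈ ({i} ∪ R) × ({j} ∪ C)` with
`(a,b) ≠ (i,j)`. -/
def HasAnchors {L : ℕ} (D : Fin L → Fin L → Bool) (Q : ℕ) (i j : Fin L) : Prop :=
  ∃ R C : Finset (Fin L), i ∉ R ∧ j ∉ C ∧ R.card = Q ∧ C.card = Q ∧
    ∀ a ∈ insert i R, ∀ b ∈ insert j C, (a, b) ≠ (i, j) → D a b = true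

private lemma measurableSet_of_finite_aux {α : Type*} [MeasurableSpace α] [Finite α]
    [MeasurableSingletonClass α] (s : Set α) : MeasurableSet s :=
  (Set.toFinite s).measurableSet

/-- **Existence of anchor rows and columns under MCAR (fixed entry).**
Let the entries `D_{ab}`, `(a,b) ∈ [L] × [L]`, be i.i.d. Bernoulli(p), let `Q ≥ 2` divide
`L − 1`, and suppose `p^{2Q²} ≥ 10 · Q · log(L−1) / (L−1)`.  Then with probability at least
`1 − (L−1)^{−10}`, the entry `(1,1)` admits `Q` anchor rows and `Q` anchor columns forming
a fully revealed submatrix. -/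
theorem anchors_exist_mcar_fixed_entry
    {Ω : Type*} [MeasurableSpace Ω] (μ : Measure Ω) [IsProbabilityMeasure μ]
    (L Q : ℕ) (hL : 2 ≤ L) (hQ : 2 ≤ Q) (hdvd : Q ∣ (L - 1))
    (p : ℝ) (hp0 : 0 ≤ p) (hp1 : p ≤ 1)
    (hp : 10 * (Q : ℝ) * Real.log ((L : ℝ) - 1) / ((L : ℝ) - 1) ≤ p ^ (2 * Q ^ 2))
    (D : Ω → Fin L → Fin L → Bool)
    (hmeas : ∀ a b : Fin L, Measurable fun ω => D ω a b)
    (hindep : iIndepFun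
      (fun q : Fin L × Fin L => fun ω => D ω q.1 q.2) μ)
    (hbern : ∀ a b : Fin L, μ {ω | D ω a b = true} = ENNReal.ofReal p) :
    1 - (ENNReal.ofReal (((L : ℝ) - 1) ^ (10 : ℕ)))⁻¹
      ≤ μ {ω | HasAnchors (D ω) Q (⟨0, by omega⟩ : Fin L) (⟨0, by omega⟩ : Fin L)} := by
  classical
  have hL3 : 3 ≤ L := by
    by_contra h
    have hL2 : L = 2 := by omega
    subst hL2
    have h1 : Q ∣ 1 := hdvd
    have := Nat.le_of_dvd one_pos h1
    omega
  have hLpos : 0 < L := by omega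
  set i0 : Fin L := ⟨0, by omega⟩ with hi0
  set m := (L - 1) / Q with hm
  have hmQ : m * Q = L - 1 := Nat.div_mul_cancel hdvd
  have hm1 : 1 ≤ m := by
    rcases Nat.eq_zero_or_pos m with h | h
    · rw [h] at hmQ; omega
    · exact h
  set n : ℕ := Q ^ 2 + 2 * Q with hn
  -- the block construction
  set e : ℕ → Fin L := fun j => ⟨j % L, Nat.mod_lt j hLpos⟩ with he
  have he_val : ∀ j, j < L → (e j).val = j := fun j hj => Nat.mod_eq_of_lt hj
  set B : ℕ → Finset (Fin L) := fun k => (Finset.range Q).image (fun t => e (1 + k * Q + t))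
    with hB
  have hbound : ∀ k t, k < m → t < Q → 1 + k * Q + t < L := by
    intro k t hk ht
    have h1 : (k + 1) * Q ≤ m * Q := Nat.mul_le_mul_right _ (by omega)
    have h2 : (k + 1) * Q = k * Q + Q := by ring
    omega
  have hBmem : ∀ k, k < m → ∀ a : Fin L,
      (a ∈ B k ↔ 1 + k * Q ≤ a.val ∧ a.val < 1 + k * Q + Q) := by
    intro k hk a
    constructor
    · intro ha
      simp only [hB, Finset.mem_image, Finset.mem_range] at ha
      obtain ⟨t, ht, rfl⟩ := ha
      rw [he_val _ (hbound k t hk ht)]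
      omega
    · rintro ⟨h1, h2⟩
      simp only [hB, Finset.mem_image, Finset.mem_range]
      refine ⟨a.val - (1 + k * Q), by omega, ?_⟩
      apply Fin.ext
      rw [he_val _ (by omega)]
      omega
  have hi0B : ∀ k, k < m → i0 ∉ B k := by
    intro k hk h
    have h2 := (hBmem k hk i0).1 h
    have hv : (i0 : Fin L).val = 0 := rfl
    omega
  have hBcard : ∀ k, k < m → (B k).card = Q := by
    intro k hk
    rw [hB]
    rw [Finset.card_image_of_injOn, Finset.card_range]
    intro t ht t' ht' hee
    simp only [Finset.coe_range, Set.mem_Iio] at ht ht'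
    have h := congrArg Fin.val hee
    rw [he_val _ (hbound k t hk ht), he_val _ (hbound k t' hk ht')] at h
    omega
  have hBdisj : ∀ k k', k < m → k' < m → k ≠ k' → Disjoint (B k) (B k') := by
    intro k k' hk hk' hne
    rw [Finset.disjoint_left]
    intro a ha ha'
    have h1 := (hBmem k hk a).1 ha
    have h2 := (hBmem k' hk' a).1 ha'
    rcases Nat.lt_or_ge k k' with h | h
    · have h3 : (k + 1) * Q ≤ k' * Q := Nat.mul_le_mul_right _ (by omega)
      have h4 : (k + 1) * Q = k * Q + Q := by ring
      omega
    · have hlt : k' < k := by omega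
      have h3 : (k' + 1) * Q ≤ k * Q := Nat.mul_le_mul_right _ (by omega)
      have h4 : (k' + 1) * Q = k' * Q + Q := by ring
      omega
  set P : ℕ → Finset (Fin L) := fun k => insert i0 (B k) with hP
  set T : ℕ → Finset (Fin L × Fin L) := fun k => ((P k) ×ˢ (P k)).erase (i0, i0) with hT
  set E : Fin L × Fin L → Set Ω := fun q => {ω | D ω q.1 q.2 = true} with hE
  have hEmeas : ∀ q, MeasurableSet (E q) := fun q => hmeas q.1 q.2 (measurableSet_singleton true)
  set A : ℕ → Set Ω := fun k => ⋂ q ∈ T k, E q with hA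
  have hAmeas : ∀ k, MeasurableSet (A k) :=
    fun k => Finset.measurableSet_biInter _ (fun q _ => hEmeas q)
  have hPcard : ∀ k, k < m → (P k).card = Q + 1 := by
    intro k hk
    simp only [hP]
    rw [Finset.card_insert_of_notMem (hi0B k hk), hBcard k hk]
  have hTcard : ∀ k, k < m → (T k).card = n := by
    intro k hk
    simp only [hT, hP]
    rw [Finset.card_erase_of_mem
      (show ((i0, i0) : Fin L × Fin L) ∈ insert i0 (B k) ×ˢ insert i0 (B k) from
        Finset.mem_product.mpr ⟨Finset.mem_insert_self _ _, Finset.mem_insert_self _ _⟩),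
      Finset.card_product]
    have hc : (insert i0 (B k)).card = Q + 1 := hPcard k hk
    rw [show (insert i0 (B k)) = P k from rfl] at hc
    rw [hc]
    have h : (Q + 1) * (Q + 1) = Q ^ 2 + 2 * Q + 1 := by ring
    omega
  have hAk : ∀ k, k < m → μ (A k) = ENNReal.ofReal p ^ n := by
    intro k hk
    have hmb := hindep.meas_biInter (S := T k) (s := E)
      (fun q _ => ⟨{true}, MeasurableSpace.measurableSet_top, rfl⟩)
    simp only [hA]
    rw [hmb, Finset.prod_congr rfl (fun q _ => by simp only [hE]; exact hbern q.1 q.2),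
      Finset.prod_const, hTcard k hk]
  have hTdisj : ∀ k k', k < m → k' < m → k ≠ k' → Disjoint (T k) (T k') := by
    intro k k' hk hk' hne
    rw [Finset.disjoint_left]
    intro q hq hq'
    simp only [hT, hP, Finset.mem_erase, Finset.mem_product, Finset.mem_insert] at hq hq'
    obtain ⟨hq0, hq1, hq2⟩ := hq
    obtain ⟨_, hq1', hq2'⟩ := hq'
    have hdisj := hBdisj k k' hk hk' hne
    rcases hq1 with h | h
    · rcases hq2 with h2 | h2
      · exact hq0 (Prod.ext h h2)
      · rcases hq2' with h2' | h2'
        · exact hi0B k hk (h2' ▸ h2)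
        · exact (Finset.disjoint_left.1 hdisj h2) h2'
    · rcases hq1' with h' | h'
      · exact hi0B k hk (h' ▸ h)
      · exact (Finset.disjoint_left.1 hdisj h) h'
  set x : ENNReal := ENNReal.ofReal p ^ n with hx
  -- independence of the block events
  have key : ∀ s : Finset ℕ, (∀ k ∈ s, k < m) → μ (⋂ k ∈ s, (A k)ᶜ) = (1 - x) ^ s.card := by
    intro s
    induction s using Finset.induction_on with
    | empty => intro _; simp
    | @insert k s hks ih =>
      intro hmemrange
      have hk : k < m := hmemrange k (Finset.mem_insert_self _ _)
      have hs : ∀ k' ∈ s, k' < m := fun k' h => hmemrange k' (Finset.mem_insert_of_mem h)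
      rw [Finset.card_insert_of_notMem hks, Finset.set_biInter_insert]
      set U : Finset (Fin L × Fin L) := s.biUnion T with hU
      have hdisjTU : Disjoint (T k) U := by
        rw [hU, Finset.disjoint_biUnion_right]
        intro k' hk'
        exact hTdisj k k' hk (hs k' hk') (by rintro rfl; exact hks hk')
      have hindepF := hindep.indepFun_finset (T k) U hdisjTU (fun q => hmeas q.1 q.2)
      set SA : Set (↥(T k) → Bool) := {g | ∀ q : ↥(T k), g q = true} with hSA
      set SB : Set (↥U → Bool) :=
        ⋂ k' ∈ s, {g : ↥U → Bool | ∀ q : ↥U, (q : Fin L × Fin L) ∈ T k' → g q = true}ᶜ with hSB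
      have hFA : (fun ω (q : ↥(T k)) => D ω (q : Fin L × Fin L).1 (q : Fin L × Fin L).2) ⁻¹' SA
          = A k := by
        ext ω
        simp only [hSA, hA, Set.mem_preimage, Set.mem_setOf_eq, Set.mem_iInter, hE,
          Subtype.forall, Finset.mem_coe]
      have hGB : (fun ω (q : ↥U) => D ω (q : Fin L × Fin L).1 (q : Fin L × Fin L).2) ⁻¹' SB
          = ⋂ k' ∈ s, (A k')ᶜ := by
        ext ω
        simp only [hSB, hA, Set.preimage_iInter, Set.mem_iInter, Set.mem_preimage,
          Set.mem_compl_iff, Set.mem_setOf_eq, hE, Subtype.forall, Finset.mem_coe]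
        refine forall₂_congr (fun k' hk' => not_congr ⟨?_, ?_⟩)
        · intro h q hq
          exact h q (Finset.mem_biUnion.2 ⟨k', hk', hq⟩) hq
        · intro h q _ hq
          exact h q hq
      have hprod := hindepF.measure_inter_preimage_eq_mul SAᶜ SB
        (measurableSet_of_finite_aux _) (measurableSet_of_finite_aux _)
      rw [Set.preimage_compl, hFA, hGB] at hprod
      rw [hprod, ih hs, prob_compl_eq_one_sub (hAmeas k), hAk k hk, pow_succ]
      ring
  have hkey := key (Finset.range m) (fun k hk => Finset.mem_range.1 hk)
  rw [Finset.card_range] at hkey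
  -- the union of block events implies HasAnchors
  have hsub : (⋃ k ∈ Finset.range m, A k) ⊆ {ω | HasAnchors (D ω) Q i0 i0} := by
    intro ω hω
    simp only [Set.mem_iUnion, Finset.mem_range] at hω
    obtain ⟨k, hk, hωk⟩ := hω
    refine ⟨B k, B k, hi0B k hk, hi0B k hk, hBcard k hk, hBcard k hk, ?_⟩
    intro a ha b hb hab
    have hmemT : (a, b) ∈ T k := by
      simp only [hT, hP, Finset.mem_erase, Finset.mem_product]
      exact ⟨hab, ha, hb⟩
    have h := Set.mem_iInter₂.1 hωk (a, b) hmemT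
    exact h
  have hcompl2 : (⋂ k ∈ Finset.range m, (A k)ᶜ)ᶜ = ⋃ k ∈ Finset.range m, A k := by
    simp [Set.compl_iInter]
  have hunion : μ (⋃ k ∈ Finset.range m, A k) = 1 - (1 - x) ^ m := by
    rw [← hcompl2, prob_compl_eq_one_sub
      (Finset.measurableSet_biInter _ (fun k _ => (hAmeas k).compl)), hkey]
  -- real analysis estimate
  set Lr : ℝ := (L : ℝ) - 1 with hLr
  have hLr2 : 2 ≤ Lr := by
    rw [hLr]
    have : (3 : ℝ) ≤ (L : ℝ) := by exact_mod_cast hL3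
    linarith
  set y : ℝ := p ^ n with hy
  have hy0 : 0 ≤ y := pow_nonneg hp0 n
  have hy1 : y ≤ 1 := pow_le_one₀ hp0 hp1
  have hreal : (1 - y) ^ m ≤ (Lr ^ (10 : ℕ))⁻¹ := by
    have hlog : 0 ≤ Real.log Lr := Real.log_nonneg (by linarith)
    have hn2 : n ≤ 2 * Q ^ 2 := by
      have h2 : 2 * Q ≤ Q ^ 2 := by nlinarith
      omega
    have hyx : 10 * (Q : ℝ) * Real.log Lr / Lr ≤ y := by
      refine le_trans ?_ (pow_le_pow_of_le_one hp0 hp1 hn2)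
      exact hp
    have hmQr : (m : ℝ) * (Q : ℝ) = Lr := by
      have h := hmQ
      have h2 : ((m * Q : ℕ) : ℝ) = ((L - 1 : ℕ) : ℝ) := congrArg (fun t : ℕ => (t : ℝ)) h
      rw [Nat.cast_mul, Nat.cast_sub (by omega), Nat.cast_one] at h2
      rw [hLr]; exact h2
    have hexp : 1 - y ≤ Real.exp (-y) := by
      have := Real.add_one_le_exp (-y); linarith
    have h1 : (1 - y) ^ m ≤ Real.exp (-y) ^ m := pow_le_pow_left₀ (by linarith) hexp m
    have h2 : Real.exp (-y) ^ m = Real.exp (-((m : ℝ) * y)) := by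
      rw [← Real.exp_nat_mul]; congr 1; ring
    have h3 : 10 * Real.log Lr ≤ (m : ℝ) * y := by
      have hstep : (m : ℝ) * (10 * (Q : ℝ) * Real.log Lr / Lr) ≤ (m : ℝ) * y :=
        mul_le_mul_of_nonneg_left hyx (Nat.cast_nonneg m)
      have heq : (m : ℝ) * (10 * (Q : ℝ) * Real.log Lr / Lr) = 10 * Real.log Lr := by
        have hLrne : Lr ≠ 0 := by linarith
        field_simp
        linear_combination Real.log Lr * hmQr
      linarith
    have h4 : Real.exp (-((m : ℝ) * y)) ≤ Real.exp (-(10 * Real.log Lr)) :=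
      Real.exp_le_exp.2 (by linarith)
    have h5 : Real.exp (-(10 * Real.log Lr)) = (Lr ^ (10 : ℕ))⁻¹ := by
      rw [Real.exp_neg]
      congr 1
      rw [show (10 : ℝ) * Real.log Lr = ((10 : ℕ) : ℝ) * Real.log Lr by norm_num,
        Real.exp_nat_mul, Real.exp_log (by linarith)]
    calc (1 - y) ^ m ≤ Real.exp (-y) ^ m := h1
      _ = Real.exp (-((m : ℝ) * y)) := h2
      _ ≤ Real.exp (-(10 * Real.log Lr)) := h4
      _ = (Lr ^ (10 : ℕ))⁻¹ := h5
  have hxy : (1 : ENNReal) - x = ENNReal.ofReal (1 - y) := by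
    rw [hx, ← ENNReal.ofReal_pow hp0, ← hy, ENNReal.ofReal_sub _ hy0, ENNReal.ofReal_one]
  have hfinal : (1 - x) ^ m ≤ (ENNReal.ofReal (Lr ^ (10 : ℕ)))⁻¹ := by
    rw [hxy, ← ENNReal.ofReal_pow (by linarith),
      ←
      ENNReal.ofReal_inv_of_pos (show (0 : ℝ) < Lr ^ (10 : ℕ) from pow_pos (by linarith) _)]
    exact ENNReal.ofReal_le_ofReal hreal
  calc 1 - (ENNReal.ofReal (Lr ^ (10 : ℕ)))⁻¹ ≤ 1 - (1 - x) ^ m := tsub_le_tsub_left hfinal 1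
    _ = μ (⋃ k ∈ Finset.range m, A k) := hunion.symm
    _ ≤ μ {ω | HasAnchors (D ω) Q i0 i0} := measure_mono hsub
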